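/- Let a, b, t be real numbers and let n be a natural number. Then the n-th iterated derivative at t of the function k ↦ exp(a + b·k²) equals exp(a + b·t²) · Σ_{j=0}^{⌊n/2⌋} ( n! / (j! · (n − 2j)!) ) · (2·b·t)^{n−2j} · b^j. -/

import Mathlib

private lemma term_step (b t : ℝ) (n j : ℕ) (h : 2 * (j + 1) ≤ n) :
    2 * b * t * (((n.factorial : ℝ) / (((j+1).factorial : ℝ) * ((n - 2 * (j+1)).factorial : ℝ)))
        * (2 * b * t) ^ (n - 2 * (j+1)) * b ^ (j+1))
    + ((n.factorial : ℝ) / ((j.factorial : ℝ) * ((n - 2 * j).factorial : ℝ)))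
        * ((↑(n - 2 * j)) * (2 * b * t) ^ (n - 2 * j - 1) * (2 * b)) * b ^ j
    = (((n+1).factorial : ℝ) / (((j+1).factorial : ℝ) * ((n + 1 - 2 * (j+1)).factorial : ℝ)))
        * (2 * b * t) ^ (n + 1 - 2 * (j+1)) * b ^ (j+1) := by
  obtain ⟨s, rfl⟩ : ∃ s, n = 2 * j + 2 + s := ⟨n - (2 * j + 2), by omega⟩
  simp only [show 2 * j + 2 + s - 2 * (j + 1) = s from by omega,
    show 2 * j + 2 + s - 2 * j = s + 2 from by omega,
    show 2 * j + 2 + s - 2 * j - 1 = s + 1 from by omega,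
    show 2 * j + 2 + s + 1 - 2 * (j + 1) = s + 1 from by omega]
  have h1 : ((2 * j + 2 + s + 1).factorial : ℝ)
      = (2 * j + 2 + s + 1) * ((2 * j + 2 + s).factorial : ℝ) := by
    rw [Nat.factorial_succ]; push_cast; ring
  have h2 : ((s + 2).factorial : ℝ) = (s + 2) * (s + 1) * (s.factorial : ℝ) := by
    rw [Nat.factorial_succ, Nat.factorial_succ]; push_cast; ring
  have h3 : ((s + 1).factorial : ℝ) = (s + 1) * (s.factorial : ℝ) := by
    rw [Nat.factorial_succ]; push_cast; ring
  have h4 : ((j + 1).factorial : ℝ) = (j + 1) * (j.factorial : ℝ) := by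
    rw [Nat.factorial_succ]; push_cast; ring
  have hj : (j.factorial : ℝ) ≠ 0 := Nat.cast_ne_zero.mpr (Nat.factorial_ne_zero _)
  have hs : (s.factorial : ℝ) ≠ 0 := Nat.cast_ne_zero.mpr (Nat.factorial_ne_zero _)
  have hs1 : ((s:ℝ) + 1) ≠ 0 := by positivity
  have hs2 : ((s:ℝ) + 2) ≠ 0 := by positivity
  have hj1 : ((j:ℝ) + 1) ≠ 0 := by positivity
  rw [h1, h2, h3, h4]
  push_cast
  field_simp
  ring

private lemma key_sum (b t : ℝ) (n : ℕ) :
    2 * b * t * ∑ j ∈ Finset.range (n / 2 + 1),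
        ((n.factorial : ℝ) / ((j.factorial : ℝ) * ((n - 2 * j).factorial : ℝ)))
          * (2 * b * t) ^ (n - 2 * j) * b ^ j
    + ∑ j ∈ Finset.range (n / 2 + 1),
        ((n.factorial : ℝ) / ((j.factorial : ℝ) * ((n - 2 * j).factorial : ℝ)))
          * ((↑(n - 2 * j)) * (2 * b * t) ^ (n - 2 * j - 1) * (2 * b)) * b ^ j
    = ∑ j ∈ Finset.range ((n + 1) / 2 + 1),
        (((n+1).factorial : ℝ) / ((j.factorial : ℝ) * ((n + 1 - 2 * j).factorial : ℝ)))
          * (2 * b * t) ^ (n + 1 - 2 * j) * b ^ j := by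
  rw [Finset.mul_sum]
  rcases Nat.even_or_odd n with ⟨m, rfl⟩ | ⟨m, rfl⟩
  · -- n = m + m
    rw [show (m + m) / 2 = m from by omega, show (m + m + 1) / 2 = m from by omega]
    rw [Finset.sum_range_succ' (fun j => 2 * b * t * _) m,
        Finset.sum_range_succ (fun j => _) m,
        Finset.sum_range_succ' (fun j => _) m]
    have hg : ((m + m).factorial : ℝ) / ((m.factorial : ℝ) * (((m + m) - 2 * m).factorial : ℝ))
        * ((↑((m + m) - 2 * m)) * (2 * b * t) ^ ((m + m) - 2 * m - 1) * (2 * b)) * b ^ m = 0 := by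
      simp [show m + m - 2 * m = 0 from by omega]
    have h0 : 2 * b * t * (((m + m).factorial : ℝ) / (((0:ℕ).factorial : ℝ) * (((m + m) - 2 * 0).factorial : ℝ))
          * (2 * b * t) ^ ((m + m) - 2 * 0) * b ^ 0)
        = ((m + m + 1).factorial : ℝ) / (((0:ℕ).factorial : ℝ) * ((m + m + 1 - 2 * 0).factorial : ℝ))
          * (2 * b * t) ^ (m + m + 1 - 2 * 0) * b ^ 0 := by
      simp only [Nat.mul_zero, Nat.sub_zero, Nat.factorial_zero, Nat.cast_one, pow_zero, mul_one, one_mul]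
      rw [div_self (Nat.cast_ne_zero.mpr (Nat.factorial_ne_zero _)),
          div_self (Nat.cast_ne_zero.mpr (Nat.factorial_ne_zero _))]
      rw [pow_succ]
      ring
    have hsum : ∀ j ∈ Finset.range m,
        2 * b * t * (((m + m).factorial : ℝ) / (((j+1).factorial : ℝ) * (((m + m) - 2 * (j+1)).factorial : ℝ))
            * (2 * b * t) ^ ((m + m) - 2 * (j+1)) * b ^ (j+1))
        + ((m + m).factorial : ℝ) / ((j.factorial : ℝ) * (((m + m) - 2 * j).factorial : ℝ))
            * ((↑((m + m) - 2 * j)) * (2 * b * t) ^ ((m + m) - 2 * j - 1) * (2 * b)) * b ^ j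
        = ((m + m + 1).factorial : ℝ) / (((j+1).factorial : ℝ) * ((m + m + 1 - 2 * (j+1)).factorial : ℝ))
            * (2 * b * t) ^ (m + m + 1 - 2 * (j+1)) * b ^ (j+1) := by
      intro j hj
      have hjm := Finset.mem_range.mp hj
      exact term_step b t (m + m) j (by omega)
    have hS : ∑ j ∈ Finset.range m,
        (2 * b * t * (((m + m).factorial : ℝ) / (((j+1).factorial : ℝ) * (((m + m) - 2 * (j+1)).factorial : ℝ))
            * (2 * b * t) ^ ((m + m) - 2 * (j+1)) * b ^ (j+1))
        + ((m + m).factorial : ℝ) / ((j.factorial : ℝ) * (((m + m) - 2 * j).factorial : ℝ))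
            * ((↑((m + m) - 2 * j)) * (2 * b * t) ^ ((m + m) - 2 * j - 1) * (2 * b)) * b ^ j)
        = ∑ j ∈ Finset.range m,
        ((m + m + 1).factorial : ℝ) / (((j+1).factorial : ℝ) * ((m + m + 1 - 2 * (j+1)).factorial : ℝ))
            * (2 * b * t) ^ (m + m + 1 - 2 * (j+1)) * b ^ (j+1) :=
      Finset.sum_congr rfl hsum
    rw [Finset.sum_add_distrib] at hS
    linear_combination hS + h0 + hg
  · -- n = 2 * m + 1
    rw [show (2 * m + 1) / 2 = m from by omega, show (2 * m + 1 + 1) / 2 = m + 1 from by omega]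
    rw [Finset.sum_range_succ' (fun j => 2 * b * t * _) m,
        Finset.sum_range_succ (fun j => _) m,
        Finset.sum_range_succ (fun j => _) (m + 1),
        Finset.sum_range_succ' (fun j => _) m]
    have hg : ((2 * m + 1).factorial : ℝ) / ((m.factorial : ℝ) * (((2 * m + 1) - 2 * m).factorial : ℝ))
          * ((↑((2 * m + 1) - 2 * m)) * (2 * b * t) ^ ((2 * m + 1) - 2 * m - 1) * (2 * b)) * b ^ m
        = ((2 * m + 1 + 1).factorial : ℝ) / (((m+1).factorial : ℝ) * ((2 * m + 1 + 1 - 2 * (m+1)).factorial : ℝ))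
          * (2 * b * t) ^ (2 * m + 1 + 1 - 2 * (m+1)) * b ^ (m+1) := by
      simp only [show 2 * m + 1 - 2 * m = 1 from by omega,
        show 2 * m + 1 - 2 * m - 1 = 0 from by omega,
        show 2 * m + 1 + 1 - 2 * (m + 1) = 0 from by omega]
      have h1 : ((2 * m + 1 + 1).factorial : ℝ) = (2 * m + 2) * ((2 * m + 1).factorial : ℝ) := by
        rw [Nat.factorial_succ]; push_cast; ring
      have h4 : ((m + 1).factorial : ℝ) = (m + 1) * (m.factorial : ℝ) := by
        rw [Nat.factorial_succ]; push_cast; ring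
      have hm : (m.factorial : ℝ) ≠ 0 := Nat.cast_ne_zero.mpr (Nat.factorial_ne_zero _)
      have hm1 : ((m:ℝ) + 1) ≠ 0 := by positivity
      rw [h1, h4]
      simp only [Nat.factorial, Nat.cast_one, pow_zero]
      field_simp
      ring
    have h0 : 2 * b * t * (((2 * m + 1).factorial : ℝ) / (((0:ℕ).factorial : ℝ) * (((2 * m + 1) - 2 * 0).factorial : ℝ))
          * (2 * b * t) ^ ((2 * m + 1) - 2 * 0) * b ^ 0)
        = ((2 * m + 1 + 1).factorial : ℝ) / (((0:ℕ).factorial : ℝ) * ((2 * m + 1 + 1 - 2 * 0).factorial : ℝ))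
          * (2 * b * t) ^ (2 * m + 1 + 1 - 2 * 0) * b ^ 0 := by
      simp only [Nat.mul_zero, Nat.sub_zero, Nat.factorial_zero, Nat.cast_one, pow_zero, mul_one, one_mul]
      rw [div_self (Nat.cast_ne_zero.mpr (Nat.factorial_ne_zero _)),
          div_self (Nat.cast_ne_zero.mpr (Nat.factorial_ne_zero _))]
      rw [pow_succ]
      ring
    have hS : ∑ j ∈ Finset.range m,
        (2 * b * t * (((2 * m + 1).factorial : ℝ) / (((j+1).factorial : ℝ) * (((2 * m + 1) - 2 * (j+1)).factorial : ℝ))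
            * (2 * b * t) ^ ((2 * m + 1) - 2 * (j+1)) * b ^ (j+1))
        + ((2 * m + 1).factorial : ℝ) / ((j.factorial : ℝ) * (((2 * m + 1) - 2 * j).factorial : ℝ))
            * ((↑((2 * m + 1) - 2 * j)) * (2 * b * t) ^ ((2 * m + 1) - 2 * j - 1) * (2 * b)) * b ^ j)
        = ∑ j ∈ Finset.range m,
        ((2 * m + 1 + 1).factorial : ℝ) / (((j+1).factorial : ℝ) * ((2 * m + 1 + 1 - 2 * (j+1)).factorial : ℝ))
            * (2 * b * t) ^ (2 * m + 1 + 1 - 2 * (j+1)) * b ^ (j+1) := by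
      refine Finset.sum_congr rfl fun j hj => ?_
      exact term_step b t (2 * m + 1) j (by have := Finset.mem_range.mp hj; omega)
    rw [Finset.sum_add_distrib] at hS
    linear_combination hS + h0 + hg

/-- Closed form of the higher-order differentiation of the Gaussian-type
function (paper's `Φ_(n)(a,b,k) = (∂/∂k)^n exp(a + b k²)`, cf. Theorem 5):
`(∂/∂t)^n exp(a + b t²)
  = exp(a + b t²) ∑_{j=0}^{⌊n/2⌋} (n!/(j!(n-2j)!)) (2bt)^(n-2j) b^j`. -/
theorem iteratedDeriv_exp_quadratic (a b t : ℝ) (n : ℕ) :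
    iteratedDeriv n (fun k : ℝ => Real.exp (a + b * k ^ 2)) t
      = Real.exp (a + b * t ^ 2)
        * ∑ j ∈ Finset.range (n / 2 + 1),
            ((n.factorial : ℝ) / ((j.factorial : ℝ) * ((n - 2 * j).factorial : ℝ)))
              * (2 * b * t) ^ (n - 2 * j) * b ^ j := by
  induction n generalizing t with
  | zero => simp [Nat.factorial]
  | succ n ih =>
    have hfun : iteratedDeriv n (fun k : ℝ => Real.exp (a + b * k ^ 2))
        = fun t : ℝ => Real.exp (a + b * t ^ 2)
            * ∑ j ∈ Finset.range (n / 2 + 1),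
                ((n.factorial : ℝ) / ((j.factorial : ℝ) * ((n - 2 * j).factorial : ℝ)))
                  * (2 * b * t) ^ (n - 2 * j) * b ^ j := funext ih
    rw [iteratedDeriv_succ, hfun]
    have hexp : HasDerivAt (fun t : ℝ => Real.exp (a + b * t ^ 2))
        (Real.exp (a + b * t ^ 2) * (2 * b * t)) t := by
      have h1 : HasDerivAt (fun t : ℝ => a + b * t ^ 2) (2 * b * t) t := by
        have := ((hasDerivAt_pow 2 t).const_mul b).const_add a
        refine this.congr_deriv ?_
        push_cast; ring
      exact h1.exp
    have hlin : HasDerivAt (fun x : ℝ => 2 * b * x) (2 * b) t := by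
      simpa using (hasDerivAt_id t).const_mul (2 * b)
    have hsum : HasDerivAt (fun t : ℝ => ∑ j ∈ Finset.range (n / 2 + 1),
          ((n.factorial : ℝ) / ((j.factorial : ℝ) * ((n - 2 * j).factorial : ℝ)))
            * (2 * b * t) ^ (n - 2 * j) * b ^ j)
        (∑ j ∈ Finset.range (n / 2 + 1),
          ((n.factorial : ℝ) / ((j.factorial : ℝ) * ((n - 2 * j).factorial : ℝ)))
            * ((↑(n - 2 * j)) * (2 * b * t) ^ (n - 2 * j - 1) * (2 * b)) * b ^ j) t := by
      refine HasDerivAt.fun_sum fun j hj => ?_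
      exact ((hlin.pow _).const_mul _).mul_const _
    rw [(hexp.fun_mul hsum).deriv]
    rw [← key_sum b t n]
    ring
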